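/- In the latent-variable model with homogeneous kernel K (i.e. K_i = K for all i) satisfying ν ≤ K(x,v,w) ≤ 1, for all 1 ≤ q ≤ n−1 and all ℓ ≥ 1: |log P(X_q | X_{q+1:n}) − log P(X_q | X_{q+1:n+ℓ})| ≤ ν^{-1}·∏_{k=q+1}^{n-1}(1−ν) = ν^{-1}(1−ν)^{n−1−q}. -/

import Mathlib

open MeasureTheory

/-- `betaAux π K x m i v` : conditional probability of observing `x i, …, x (i+m-1)`
given that the latent variable with index `i` equals `v`, in the model where the
latent variables are i.i.d. with law `π` and `P(X_i = y | V) = K i y V_i V_{i+1}`. -/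
noncomputable def betaAux {V 𝕏 : Type*} [MeasurableSpace V] (π : Measure V)
    (K : ℕ → 𝕏 → V → V → ℝ) (x : ℕ → 𝕏) : ℕ → ℕ → V → ℝ
  | 0, _, _ => 1
  | m + 1, i, v => ∫ w, K i (x i) v w * betaAux π K x m (i + 1) w ∂π

/-- Marginal likelihood `P(X_q = x_q, …, X_n = x_n)`. -/
noncomputable def margP {V 𝕏 : Type*} [MeasurableSpace V] (π : Measure V)
    (K : ℕ → 𝕏 → V → V → ℝ) (x : ℕ → 𝕏) (q n : ℕ) : ℝ :=
  ∫ v, betaAux π K x (n + 1 - q) q v ∂π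

/-- Conditional probability `P(X_q = x_q | X_{q+1:n} = x_{q+1:n})`. -/
noncomputable def condP {V 𝕏 : Type*} [MeasurableSpace V] (π : Measure V)
    (K : ℕ → 𝕏 → V → V → ℝ) (x : ℕ → 𝕏) (q n : ℕ) : ℝ :=
  margP π K x q n / margP π K x (q + 1) n

/-- One step of the (unnormalized) forward smoothing operator. -/
noncomputable def stepOp {V : Type*} [MeasurableSpace V] (π : Measure V)
    (Kf : V → V → ℝ) (f : V → ℝ) : V → ℝ :=
  fun w => ∫ v, f v * Kf v w ∂π

/-- Iterated forward smoothing operator, using kernels `Ks i, Ks (i+1), …`. -/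
noncomputable def chainOp {V : Type*} [MeasurableSpace V] (π : Measure V)
    (Ks : ℕ → V → V → ℝ) : ℕ → ℕ → (V → ℝ) → V → ℝ
  | _, 0, f => f
  | i, k + 1, f => chainOp π Ks (i + 1) k (stepOp π (Ks i) f)

lemma integrable_of_le_const {α : Type*} [MeasurableSpace α] (μ : Measure α) [IsFiniteMeasure μ]
    {f : α → ℝ} {C : ℝ} (hm : AEStronglyMeasurable f μ) (h : ∀ a, |f a| ≤ C) :
    Integrable f μ :=
  (integrable_const C).mono' hm (Filter.Eventually.of_forall fun a => by simpa using h a)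

set_option maxHeartbeats 4000000 in
theorem condP_forgetting {V 𝕏 : Type*} [MeasurableSpace V] [Countable 𝕏]
    (π : Measure V) [IsProbabilityMeasure π]
    (K : 𝕏 → V → V → ℝ) (ν : ℝ)
    (hKmeas : ∀ y : 𝕏, Measurable fun p : V × V => K y p.1 p.2)
    (hKsum : ∀ v w : V, HasSum (fun y : 𝕏 => K y v w) 1)
    (hν0 : 0 < ν) (hν1 : ν ≤ 1)
    (hKlb : ∀ (y : 𝕏) (v w : V), ν ≤ K y v w)
    (hKub : ∀ (y : 𝕏) (v w : V), K y v w ≤ 1)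
    (x : ℕ → 𝕏) (q n ℓ : ℕ) (hq : 1 ≤ q) (hqn : q + 1 ≤ n) (hℓ : 1 ≤ ℓ) :
    |Real.log (condP π (fun _ => K) x q n) - Real.log (condP π (fun _ => K) x q (n + ℓ))|
      ≤ ν⁻¹ * (1 - ν) ^ (n - 1 - q) := by
  classical
  have hVne : Nonempty V := by
    by_contra h
    rw [not_nonempty_iff] at h
    have h1 : π Set.univ = 1 := measure_univ
    have h2 : (Set.univ : Set V) = ∅ := Set.univ_eq_empty_iff.mpr h
    rw [h2, measure_empty] at h1
    exact zero_ne_one h1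
  have hν0' : (0:ℝ) ≤ ν := hν0.le
  have h1ν : (0:ℝ) ≤ 1 - ν := by linarith
  set KS : ℕ → V → V → ℝ := fun i => K (x i) with hKSdef
  have hKSm : ∀ i, Measurable fun p : V × V => KS i p.1 p.2 := fun i => hKmeas (x i)
  have hKSlb : ∀ i (v w : V), ν ≤ KS i v w := fun i v w => hKlb (x i) v w
  have hKSub : ∀ i (v w : V), KS i v w ≤ 1 := fun i v w => hKub (x i) v w
  have hK0 : ∀ i (v w : V), 0 ≤ KS i v w := fun i v w => le_trans hν0' (hKSlb i v w)
  have hKabs : ∀ i (v w : V), |KS i v w| ≤ 1 := fun i v w =>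
    abs_le.2 ⟨by have := hKSlb i v w; linarith, hKSub i v w⟩
  have hKm1 : ∀ i (w : V), Measurable fun v => KS i v w := fun i w =>
    (hKSm i).comp (measurable_id.prodMk measurable_const)
  -- integrability of `v ↦ f v * KS i v w`
  have hIntK : ∀ (i : ℕ) (f : V → ℝ) (C : ℝ) (w : V), Measurable f → (∀ v, |f v| ≤ C) →
      Integrable (fun v => f v * KS i v w) π := by
    intro i f C w hf hfC
    refine integrable_of_le_const π ((hf.mul (hKm1 i w)).aestronglyMeasurable) (C := C) ?_
    intro v
    have hC0 : 0 ≤ C := le_trans (abs_nonneg _) (hfC v)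
    calc |f v * KS i v w| = |f v| * |KS i v w| := abs_mul _ _
      _ ≤ C * 1 := mul_le_mul (hfC v) (hKabs i v w) (abs_nonneg _) hC0
      _ = C := mul_one C
  have hstepMeas : ∀ (i : ℕ) (f : V → ℝ), Measurable f → Measurable (stepOp π (KS i) f) := by
    intro i f hf
    have hprod : Measurable fun p : V × V => f p.2 * KS i p.2 p.1 :=
      (hf.comp measurable_snd).mul ((hKSm i).comp (measurable_snd.prodMk measurable_fst))
    exact hprod.stronglyMeasurable.integral_prod_right'.measurable
  have hstepBnd : ∀ (i : ℕ) (f : V → ℝ) (a : ℝ), Measurable f → 0 ≤ a →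
      (∀ v, a ≤ f v ∧ f v ≤ 1) →
      ∀ w, ν * a ≤ stepOp π (KS i) f w ∧ stepOp π (KS i) f w ≤ 1 := by
    intro i f a hf ha hfb w
    have hfabs : ∀ v, |f v| ≤ 1 := fun v => abs_le.2 ⟨le_trans (by linarith) (hfb v).1, (hfb v).2⟩
    have hint := hIntK i f 1 w hf hfabs
    constructor
    · have h2 : ∀ v, a * ν ≤ f v * KS i v w := fun v =>
        mul_le_mul (hfb v).1 (hKSlb i v w) hν0' (le_trans ha (hfb v).1)
      calc ν * a = ∫ (_ : V), a * ν ∂π := by simp [mul_comm]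
        _ ≤ ∫ v, f v * KS i v w ∂π := integral_mono (integrable_const _) hint h2
    · have h2 : ∀ v, f v * KS i v w ≤ 1 := fun v => by
        have := mul_le_mul (hfb v).2 (hKSub i v w) (hK0 i v w) zero_le_one
        simpa using this
      calc stepOp π (KS i) f w ≤ ∫ (_ : V), (1:ℝ) ∂π := integral_mono hint (integrable_const _) h2
        _ = 1 := by simp
  have hstepAbs : ∀ (i : ℕ) (f : V → ℝ) (C : ℝ), Measurable f → (∀ v, |f v| ≤ C) →
      ∀ w, |stepOp π (KS i) f w| ≤ C := by
    intro i f C hf hfC w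
    have hC0 : 0 ≤ C := le_trans (abs_nonneg _) (hfC (Classical.arbitrary V))
    have h1 : |stepOp π (KS i) f w| ≤ ∫ v, |f v * KS i v w| ∂π := by
      have h := norm_integral_le_integral_norm (μ := π) (fun v => f v * KS i v w)
      simp only [Real.norm_eq_abs] at h
      exact h
    refine le_trans h1 ?_
    have h2 : ∫ v, |f v * KS i v w| ∂π ≤ ∫ (_ : V), C ∂π := by
      refine integral_mono (hIntK i f C w hf hfC).abs (integrable_const _) (fun v => ?_)
      calc |f v * KS i v w| = |f v| * |KS i v w| := abs_mul _ _
        _ ≤ C * 1 := mul_le_mul (hfC v) (hKabs i v w) (abs_nonneg _) hC0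
        _ = C := mul_one C
    have h3 : ∫ (_ : V), C ∂π = C := by simp
    linarith
  have hstepMono : ∀ (i : ℕ) (F H : V → ℝ) (CF CH : ℝ), Measurable F → Measurable H →
      (∀ v, |F v| ≤ CF) → (∀ v, |H v| ≤ CH) → (∀ v, F v ≤ H v) →
      ∀ w, stepOp π (KS i) F w ≤ stepOp π (KS i) H w := by
    intro i F H CF CH hF hH hFC hHC hFH w
    exact integral_mono (hIntK i F CF w hF hFC) (hIntK i H CH w hH hHC)
      (fun v => mul_le_mul_of_nonneg_right (hFH v) (hK0 i v w))
  have hstepCMul : ∀ (i : ℕ) (f : V → ℝ) (c : ℝ) (w : V),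
      stepOp π (KS i) (fun v => c * f v) w = c * stepOp π (KS i) f w := by
    intro i f c w
    show ∫ v, (c * f v) * KS i v w ∂π = c * ∫ v, f v * KS i v w ∂π
    simp_rw [mul_assoc]
    exact integral_const_mul c _
  -- difference of steps as a single integral
  have hstepSub : ∀ (i : ℕ) (F H : V → ℝ) (L : ℝ) (w : V), Measurable F → Measurable H →
      (∀ v, |F v| ≤ 1) → (∀ v, |H v| ≤ 1) →
      stepOp π (KS i) F w - L * stepOp π (KS i) H w
        = ∫ v, (F v - L * H v) * KS i v w ∂π := by
    intro i F H L w hF hH hFb hHb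
    rw [eq_comm]
    calc ∫ v, (F v - L * H v) * KS i v w ∂π
        = ∫ v, (F v * KS i v w - L * (H v * KS i v w)) ∂π := by
          congr 1; funext v; ring
      _ = stepOp π (KS i) F w - L * stepOp π (KS i) H w := by
          rw [integral_sub (hIntK i F 1 w hF hFb) ((hIntK i H 1 w hH hHb).const_mul L),
            integral_const_mul]
          rfl
  -- chain lemmas
  have hchainMeas : ∀ (k i : ℕ) (f : V → ℝ), Measurable f →
      Measurable (chainOp π KS i k f) := by
    intro k
    induction k with
    | zero => intro i f hf; exact hf
    | succ k ih => intro i f hf; exact ih (i+1) _ (hstepMeas i f hf)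
  have hchainBnd : ∀ (k i : ℕ) (f : V → ℝ) (a : ℝ), Measurable f → 0 ≤ a →
      (∀ v, a ≤ f v ∧ f v ≤ 1) →
      ∀ v, ν ^ k * a ≤ chainOp π KS i k f v ∧ chainOp π KS i k f v ≤ 1 := by
    intro k
    induction k with
    | zero =>
      intro i f a hf ha hfb v
      refine ⟨?_, (hfb v).2⟩
      show ν ^ 0 * a ≤ f v
      simpa using (hfb v).1
    | succ k ih =>
      intro i f a hf ha hfb v
      obtain ⟨h2, h3⟩ := ih (i+1) (stepOp π (KS i) f) (ν * a) (hstepMeas i f hf)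
        (mul_nonneg hν0' ha) (hstepBnd i f a hf ha hfb) v
      refine ⟨?_, h3⟩
      calc ν ^ (k+1) * a = ν ^ k * (ν * a) := by ring
        _ ≤ _ := h2
  have hchainCMul : ∀ (k i : ℕ) (f : V → ℝ) (c : ℝ) (v : V),
      chainOp π KS i k (fun u => c * f u) v = c * chainOp π KS i k f v := by
    intro k
    induction k with
    | zero => intro i f c v; rfl
    | succ k ih =>
      intro i f c v
      show chainOp π KS (i+1) k (stepOp π (KS i) fun u => c * f u) v = _
      have he : (stepOp π (KS i) fun u => c * f u) = fun w => c * stepOp π (KS i) f w :=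
        funext fun w => hstepCMul i f c w
      rw [he]
      exact ih (i+1) _ c v
  have hchainMono : ∀ (k i : ℕ) (F H : V → ℝ) (CF CH : ℝ), Measurable F → Measurable H →
      (∀ v, |F v| ≤ CF) → (∀ v, |H v| ≤ CH) → (∀ v, F v ≤ H v) →
      ∀ v, chainOp π KS i k F v ≤ chainOp π KS i k H v := by
    intro k
    induction k with
    | zero => intro _ _ _ _ _ _ _ _ _ h v; exact h v
    | succ k ih =>
      intro i F H CF CH hF hH hFC hHC hFH v
      exact ih (i+1) _ _ CF CH (hstepMeas i F hF) (hstepMeas i H hH)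
        (hstepAbs i F CF hF hFC) (hstepAbs i H CH hH hHC)
        (hstepMono i F H CF CH hF hH hFC hHC hFH) v
  have hchainSplit : ∀ (a b i : ℕ) (f : V → ℝ),
      chainOp π KS i (a + b) f = chainOp π KS (i + a) b (chainOp π KS i a f) := by
    intro a
    induction a with
    | zero => intro b i f; rw [Nat.zero_add, Nat.add_zero]; rfl
    | succ a ih =>
      intro b i f
      have h1 : a + 1 + b = (a + b) + 1 := by omega
      rw [h1]
      show chainOp π KS (i+1) (a + b) (stepOp π (KS i) f) = _
      rw [ih b (i+1) (stepOp π (KS i) f)]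
      have h2 : i + 1 + a = i + (a + 1) := by omega
      rw [h2]
      rfl
  -- one-step interval contraction
  have hstep1 : ∀ (i : ℕ) (G W : V → ℝ) (aG aW L U : ℝ), Measurable G → Measurable W →
      0 < aG → 0 < aW → (∀ v, aG ≤ G v ∧ G v ≤ 1) → (∀ v, aW ≤ W v ∧ W v ≤ 1) →
      0 ≤ L → U ≤ 1 → (∀ v, L * W v ≤ G v ∧ G v ≤ U * W v) →
      ∃ L' U', L ≤ L' ∧ U' ≤ U ∧ U' - L' = (1 - ν) * (U - L) ∧
        ∀ w, L' * stepOp π (KS i) W w ≤ stepOp π (KS i) G w ∧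
             stepOp π (KS i) G w ≤ U' * stepOp π (KS i) W w := by
    intro i G W aG aW L U hG hW haG haW hGb hWb hL0 hU1 hsand
    have hGabs : ∀ v, |G v| ≤ 1 := fun v => abs_le.2 ⟨by linarith [(hGb v).1], (hGb v).2⟩
    have hWabs : ∀ v, |W v| ≤ 1 := fun v => abs_le.2 ⟨by linarith [(hWb v).1], (hWb v).2⟩
    have hIntG : Integrable G π := integrable_of_le_const π hG.aestronglyMeasurable hGabs
    have hIntW : Integrable W π := integrable_of_le_const π hW.aestronglyMeasurable hWabs
    set Gb := ∫ v, G v ∂π with hGbar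
    set Wb := ∫ v, W v ∂π with hWbar
    have hWbpos : 0 < Wb := by
      have h := integral_mono (integrable_const aW) hIntW (fun v => (hWb v).1)
      simp only [integral_const, probReal_univ, measure_univ, ENNReal.toReal_one, one_smul] at h
      linarith
    have hLG : L * Wb ≤ Gb := by
      have h := integral_mono (hIntW.const_mul L) hIntG (fun v => (hsand v).1)
      rwa [integral_const_mul] at h
    have hGU : Gb ≤ U * Wb := by
      have h := integral_mono hIntG (hIntW.const_mul U) (fun v => (hsand v).2)
      rwa [integral_const_mul] at h
    set c := Gb / Wb with hcdef
    have hLc : L ≤ c := (le_div_iff₀ hWbpos).2 hLG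
    have hcU : c ≤ U := (div_le_iff₀ hWbpos).2 (by linarith)
    have hcWb : c * Wb = Gb := by
      rw [hcdef]; exact div_mul_cancel₀ Gb (ne_of_gt hWbpos)
    refine ⟨L + ν * (c - L), U - ν * (U - c), ?_, ?_, by ring, ?_⟩
    · have := mul_nonneg hν0' (sub_nonneg.2 hLc); linarith
    · have := mul_nonneg hν0' (sub_nonneg.2 hcU); linarith
    intro w
    have hintGLW : Integrable (fun v => (G v - L * W v) * KS i v w) π := by
      refine integrable_of_le_const π
        (((hG.sub (hW.const_mul L)).mul (hKm1 i w)).aestronglyMeasurable) (C := 2) ?_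
      intro v
      have h1 : |G v - L * W v| ≤ 2 := by
        rw [abs_le]
        constructor <;> nlinarith [(hGb v).1, (hGb v).2, (hWb v).1, (hWb v).2,
          mul_nonneg hL0 (le_trans haW.le (hWb v).1),
          mul_le_mul_of_nonneg_left (hWb v).2 hL0]
      calc |(G v - L * W v) * KS i v w| = |G v - L * W v| * |KS i v w| := abs_mul _ _
        _ ≤ 2 * 1 := mul_le_mul h1 (hKabs i v w) (abs_nonneg _) (by norm_num)
        _ = 2 := by norm_num
    have hintUWG : Integrable (fun v => (U * W v - 1 * G v) * KS i v w) π := by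
      refine integrable_of_le_const π
        ((((hW.const_mul U).sub (hG.const_mul 1)).mul (hKm1 i w)).aestronglyMeasurable)
        (C := 2) ?_
      intro v
      have hU0 : 0 ≤ U := le_trans hL0 (le_trans hLc hcU)
      have h1 : |U * W v - 1 * G v| ≤ 2 := by
        rw [abs_le]
        constructor <;> nlinarith [(hGb v).1, (hGb v).2, (hWb v).1, (hWb v).2,
          mul_nonneg hU0 (le_trans haW.le (hWb v).1),
          mul_le_mul_of_nonneg_left (hWb v).2 hU0]
      calc |(U * W v - 1 * G v) * KS i v w| = |U * W v - 1 * G v| * |KS i v w| := abs_mul _ _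
        _ ≤ 2 * 1 := mul_le_mul h1 (hKabs i v w) (abs_nonneg _) (by norm_num)
        _ = 2 := by norm_num
    -- step W is at most Wb
    have hstepWle : stepOp π (KS i) W w ≤ Wb := by
      refine le_trans (integral_mono (hIntK i W 1 w hW hWabs) hIntW (fun v => ?_)) le_rfl
      have h := mul_le_mul_of_nonneg_left (hKSub i v w) (le_trans haW.le (hWb v).1)
      simpa using h
    -- lower bound
    have hlow : ν * (Gb - L * Wb) ≤ stepOp π (KS i) G w - L * stepOp π (KS i) W w := by
      rw [hstepSub i G W L w hG hW hGabs hWabs]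
      have hconst : ∫ v, ν * (G v - L * W v) ∂π = ν * (Gb - L * Wb) := by
        rw [integral_const_mul, integral_sub hIntG (hIntW.const_mul L), integral_const_mul]
      rw [← hconst]
      refine integral_mono ((hIntG.sub (hIntW.const_mul L)).const_mul ν) hintGLW (fun v => ?_)
      have h0 : 0 ≤ G v - L * W v := by linarith [(hsand v).1]
      calc ν * (G v - L * W v) = (G v - L * W v) * ν := mul_comm _ _
        _ ≤ (G v - L * W v) * KS i v w := mul_le_mul_of_nonneg_left (hKSlb i v w) h0
    -- upper bound
    have hupp : ν * (U * Wb - Gb) ≤ U * stepOp π (KS i) W w - stepOp π (KS i) G w := by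
      have hUW : (∀ v, |U * W v| ≤ 1) := by
        intro v
        have hU0 : 0 ≤ U := le_trans hL0 (le_trans hLc hcU)
        rw [abs_mul]
        calc |U| * |W v| ≤ 1 * 1 :=
            mul_le_mul (abs_le.2 ⟨by linarith, hU1⟩) (hWabs v) (abs_nonneg _) zero_le_one
          _ = 1 := by norm_num
      have h := hstepSub i (fun v => U * W v) G 1 w (hW.const_mul U) hG hUW hGabs
      rw [hstepCMul i W U w, one_mul] at h
      rw [h]
      have hconst : ∫ v, ν * (U * W v - 1 * G v) ∂π = ν * (U * Wb - Gb) := by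
        rw [integral_const_mul, integral_sub (hIntW.const_mul U) (hIntG.const_mul 1),
          integral_const_mul, integral_const_mul]
        rw [hWbar, hGbar]; ring
      rw [← hconst]
      refine integral_mono (((hIntW.const_mul U).sub (hIntG.const_mul 1)).const_mul ν)
        hintUWG (fun v => ?_)
      have h0 : 0 ≤ U * W v - 1 * G v := by
        have := (hsand v).2; linarith
      calc ν * (U * W v - 1 * G v) = (U * W v - 1 * G v) * ν := mul_comm _ _
        _ ≤ (U * W v - 1 * G v) * KS i v w := mul_le_mul_of_nonneg_left (hKSlb i v w) h0
    have hcoefL : 0 ≤ ν * (c - L) := mul_nonneg hν0' (sub_nonneg.2 hLc)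
    have hcoefU : 0 ≤ ν * (U - c) := mul_nonneg hν0' (sub_nonneg.2 hcU)
    have hWc1 : ν * (c - L) * stepOp π (KS i) W w ≤ ν * (c - L) * Wb :=
      mul_le_mul_of_nonneg_left hstepWle hcoefL
    have hWc2 : ν * (U - c) * stepOp π (KS i) W w ≤ ν * (U - c) * Wb :=
      mul_le_mul_of_nonneg_left hstepWle hcoefU
    have hid1 : ν * (c - L) * Wb = ν * (Gb - L * Wb) := by
      have : (c - L) * Wb = Gb - L * Wb := by rw [sub_mul, hcWb]
      calc ν * (c - L) * Wb = ν * ((c - L) * Wb) := by ring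
        _ = ν * (Gb - L * Wb) := by rw [this]
    have hid2 : ν * (U - c) * Wb = ν * (U * Wb - Gb) := by
      have : (U - c) * Wb = U * Wb - Gb := by rw [sub_mul, hcWb]
      calc ν * (U - c) * Wb = ν * ((U - c) * Wb) := by ring
        _ = ν * (U * Wb - Gb) := by rw [this]
    constructor
    · have hexp : (L + ν * (c - L)) * stepOp π (KS i) W w
          = L * stepOp π (KS i) W w + ν * (c - L) * stepOp π (KS i) W w := by ring
      rw [hexp]
      have := hWc1
      rw [hid1] at this
      linarith
    · have hexp : (U - ν * (U - c)) * stepOp π (KS i) W w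
          = U * stepOp π (KS i) W w - ν * (U - c) * stepOp π (KS i) W w := by ring
      rw [hexp]
      have := hWc2
      rw [hid2] at this
      linarith
  -- main contraction along the chain
  have hMain : ∀ (k i : ℕ) (G W : V → ℝ) (aG aW L U : ℝ), Measurable G → Measurable W →
      0 < aG → 0 < aW → (∀ v, aG ≤ G v ∧ G v ≤ 1) → (∀ v, aW ≤ W v ∧ W v ≤ 1) →
      ν ≤ L → U ≤ 1 → (∀ v, L * W v ≤ G v ∧ G v ≤ U * W v) →
      ∃ L' U', ν ≤ L' ∧ U' ≤ 1 ∧ U' - L' ≤ (1 - ν) ^ k * (U - L) ∧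
        ∀ v, L' * chainOp π KS i k W v ≤ chainOp π KS i k G v ∧
             chainOp π KS i k G v ≤ U' * chainOp π KS i k W v := by
    intro k
    induction k with
    | zero =>
      intro i G W aG aW L U hG hW haG haW hGb hWb hL hU1 hsand
      exact ⟨L, U, hL, hU1, by simp, hsand⟩
    | succ k ih =>
      intro i G W aG aW L U hG hW haG haW hGb hWb hL hU1 hsand
      obtain ⟨L₁, U₁, hLL₁, hU₁U, heq, hsand₁⟩ :=
        hstep1 i G W aG aW L U hG hW haG haW hGb hWb (le_trans hν0' hL) hU1 hsand
      obtain ⟨L', U', h1, h2, h3, h4⟩ := ih (i+1) (stepOp π (KS i) G) (stepOp π (KS i) W)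
        (ν * aG) (ν * aW) L₁ U₁ (hstepMeas i G hG) (hstepMeas i W hW)
        (mul_pos hν0 haG) (mul_pos hν0 haW) (hstepBnd i G aG hG haG.le hGb)
        (hstepBnd i W aW hW haW.le hWb) (le_trans hL hLL₁) (le_trans hU₁U hU1)
        hsand₁
      refine ⟨L', U', h1, h2, ?_, h4⟩
      calc U' - L' ≤ (1 - ν) ^ k * (U₁ - L₁) := h3
        _ = (1 - ν) ^ k * ((1 - ν) * (U - L)) := by rw [heq]
        _ = (1 - ν) ^ (k+1) * (U - L) := by ring
  -- betaAux : measurability and bounds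
  have hβmeas : ∀ (m i : ℕ), Measurable (betaAux π (fun _ => K) x m i) := by
    intro m
    induction m with
    | zero => intro i; exact measurable_const
    | succ m ih =>
      intro i
      have hprod : Measurable fun p : V × V =>
          K (x i) p.1 p.2 * betaAux π (fun _ => K) x m (i+1) p.2 :=
        (hKmeas (x i)).mul ((ih (i+1)).comp measurable_snd)
      exact hprod.stronglyMeasurable.integral_prod_right'.measurable
  have hβbnd : ∀ (m i : ℕ) (v : V),
      ν ^ m ≤ betaAux π (fun _ => K) x m i v ∧ betaAux π (fun _ => K) x m i v ≤ 1 := by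
    intro m
    induction m with
    | zero =>
      intro i v
      constructor
      · show ν ^ 0 ≤ (1:ℝ)
        norm_num
      · show (1:ℝ) ≤ 1
        norm_num
    | succ m ih =>
      intro i v
      have hmeasi : Measurable fun w => K (x i) v w * betaAux π (fun _ => K) x m (i+1) w :=
        ((hKmeas (x i)).comp (measurable_const.prodMk measurable_id)).mul (hβmeas m (i+1))
      have hint : Integrable (fun w => K (x i) v w * betaAux π (fun _ => K) x m (i+1) w) π := by
        refine integrable_of_le_const π hmeasi.aestronglyMeasurable (C := 1) ?_
        intro w
        rw [abs_mul]
        have hb1 : |betaAux π (fun _ => K) x m (i+1) w| ≤ 1 := by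
          have hp := pow_nonneg hν0' m
          have h1 := (ih (i+1) w).1
          have h2 := (ih (i+1) w).2
          rw [abs_le]
          constructor <;> linarith
        calc |K (x i) v w| * |betaAux π (fun _ => K) x m (i+1) w|
            ≤ 1 * 1 := mul_le_mul (hKabs i v w) hb1 (abs_nonneg _) zero_le_one
          _ = 1 := by norm_num
      constructor
      · have hb1 : ν ^ (m+1) = ∫ (_ : V), ν * ν ^ m ∂π := by
          simp only [integral_const, probReal_univ, measure_univ, ENNReal.toReal_one, one_smul]
          ring
        have hb2 : ∫ (_ : V), ν * ν ^ m ∂π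
            ≤ ∫ w, K (x i) v w * betaAux π (fun _ => K) x m (i+1) w ∂π := by
          refine integral_mono (integrable_const _) hint (fun w => ?_)
          exact mul_le_mul (hKlb (x i) v w) (ih (i+1) w).1 (by positivity) (hK0 i v w)
        have hb3 : ∫ w, K (x i) v w * betaAux π (fun _ => K) x m (i+1) w ∂π
            = betaAux π (fun _ => K) x (m+1) i v := rfl
        rw [hb1, ← hb3]
        exact hb2
      · calc betaAux π (fun _ => K) x (m+1) i v
            = ∫ w, K (x i) v w * betaAux π (fun _ => K) x m (i+1) w ∂π := rfl
          _ ≤ ∫ (_ : V), (1:ℝ) ∂π := by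
            refine integral_mono hint (integrable_const _) (fun w => ?_)
            have h1 : 0 ≤ betaAux π (fun _ => K) x m (i+1) w :=
              le_trans (pow_nonneg hν0' m) (ih (i+1) w).1
            have := mul_le_mul (hKub (x i) v w) (ih (i+1) w).2 h1 zero_le_one
            simpa using this
          _ = 1 := by simp
  -- key identity: ∫ f·β_m(i) dπ = ∫ chain i m f dπ
  have hkey : ∀ (m i : ℕ) (f : V → ℝ), Measurable f → (∀ v, 0 ≤ f v ∧ f v ≤ 1) →
      ∫ v, f v * betaAux π (fun _ => K) x m i v ∂π = ∫ v, chainOp π KS i m f v ∂π := by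
    intro m
    induction m with
    | zero =>
      intro i f hf hfb
      show ∫ v, f v * 1 ∂π = ∫ v, f v ∂π
      simp
    | succ m ih =>
      intro i f hf hfb
      have hfabs : ∀ v, |f v| ≤ 1 := fun v => abs_le.2 ⟨by linarith [(hfb v).1], (hfb v).2⟩
      have hFprodMeas : Measurable (Function.uncurry fun v w =>
          f v * (KS i v w * betaAux π (fun _ => K) x m (i+1) w)) := by
        apply Measurable.mul
        · exact hf.comp measurable_fst
        · exact (hKSm i).mul ((hβmeas m (i+1)).comp measurable_snd)
      have hFint : Integrable (Function.uncurry fun v w =>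
          f v * (KS i v w * betaAux π (fun _ => K) x m (i+1) w)) (π.prod π) := by
        refine integrable_of_le_const (π.prod π) hFprodMeas.aestronglyMeasurable (C := 1) ?_
        rintro ⟨v, w⟩
        show |f v * (KS i v w * betaAux π (fun _ => K) x m (i+1) w)| ≤ 1
        have hβ0 : 0 ≤ betaAux π (fun _ => K) x m (i+1) w :=
          le_trans (pow_nonneg hν0' m) (hβbnd m (i+1) w).1
        rw [abs_mul, abs_mul]
        have hb1 : |betaAux π (fun _ => K) x m (i+1) w| ≤ 1 :=
          abs_le.2 ⟨by linarith, (hβbnd m (i+1) w).2⟩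
        have hb2 : |KS i v w| * |betaAux π (fun _ => K) x m (i+1) w| ≤ 1 * 1 :=
          mul_le_mul (hKabs i v w) hb1 (abs_nonneg _) zero_le_one
        calc |f v| * (|KS i v w| * |betaAux π (fun _ => K) x m (i+1) w|)
            ≤ 1 * (1 * 1) := mul_le_mul (hfabs v) (by linarith) (by positivity) zero_le_one
          _ = 1 := by norm_num
      have h1 : ∫ v, f v * betaAux π (fun _ => K) x (m+1) i v ∂π
          = ∫ v, ∫ w, f v * (KS i v w * betaAux π (fun _ => K) x m (i+1) w) ∂π ∂π := by
        congr 1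
        funext v
        show f v * (∫ w, KS i v w * betaAux π (fun _ => K) x m (i+1) w ∂π) = _
        rw [eq_comm]
        exact integral_const_mul (f v) _
      rw [h1, integral_integral_swap hFint]
      have h2 : ∀ w, ∫ v, f v * (KS i v w * betaAux π (fun _ => K) x m (i+1) w) ∂π
          = stepOp π (KS i) f w * betaAux π (fun _ => K) x m (i+1) w := by
        intro w
        calc ∫ v, f v * (KS i v w * betaAux π (fun _ => K) x m (i+1) w) ∂π
            = ∫ v, (f v * KS i v w) * betaAux π (fun _ => K) x m (i+1) w ∂π := by
              congr 1; funext v; ring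
          _ = (∫ v, f v * KS i v w ∂π) * betaAux π (fun _ => K) x m (i+1) w :=
              integral_mul_const _ _
      rw [show (fun w => ∫ v, f v * (KS i v w * betaAux π (fun _ => K) x m (i+1) w) ∂π)
          = fun w => stepOp π (KS i) f w * betaAux π (fun _ => K) x m (i+1) w from funext h2]
      have hstepb := hstepBnd i f 0 hf le_rfl (fun v => ⟨(hfb v).1, (hfb v).2⟩)
      have hstepb' : ∀ w, 0 ≤ stepOp π (KS i) f w ∧ stepOp π (KS i) f w ≤ 1 := by
        intro w
        obtain ⟨hl, hr⟩ := hstepb w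
        exact ⟨by linarith [hl], hr⟩
      exact ih (i+1) (stepOp π (KS i) f) (hstepMeas i f hf) hstepb'
  -- expressing margP via the chains
  have hone : ∀ v : V, (0:ℝ) ≤ (fun _ : V => (1:ℝ)) v ∧ (fun _ : V => (1:ℝ)) v ≤ 1 :=
    fun v => ⟨zero_le_one, le_rfl⟩
  have hmarg1 : ∀ N : ℕ, q ≤ N → margP π (fun _ => K) x q N
      = ∫ v, chainOp π KS (q+1) (N - q) (stepOp π (KS q) (fun _ => (1:ℝ))) v ∂π := by
    intro N hqN
    show ∫ v, betaAux π (fun _ => K) x (N + 1 - q) q v ∂π = _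
    have h1 : ∫ v, betaAux π (fun _ => K) x (N + 1 - q) q v ∂π
        = ∫ v, (fun _ : V => (1:ℝ)) v * betaAux π (fun _ => K) x (N + 1 - q) q v ∂π := by
      simp
    rw [h1, hkey (N + 1 - q) q (fun _ => 1) measurable_const hone]
    have h2 : N + 1 - q = (N - q) + 1 := by omega
    rw [h2]
    rfl
  have hmarg2 : ∀ N : ℕ, q ≤ N → margP π (fun _ => K) x (q+1) N
      = ∫ v, chainOp π KS (q+1) (N - q) (fun _ => (1:ℝ)) v ∂π := by
    intro N hqN
    show ∫ v, betaAux π (fun _ => K) x (N + 1 - (q+1)) (q+1) v ∂π = _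
    have h1 : N + 1 - (q + 1) = N - q := by omega
    rw [h1]
    have h2 : ∫ v, betaAux π (fun _ => K) x (N - q) (q+1) v ∂π
        = ∫ v, (fun _ : V => (1:ℝ)) v * betaAux π (fun _ => K) x (N - q) (q+1) v ∂π := by
      simp
    rw [h2, hkey (N - q) (q+1) (fun _ => 1) measurable_const hone]
  -- the function g and the common interval
  set g : V → ℝ := stepOp π (KS q) (fun _ => (1:ℝ)) with hgdef
  have hgmeas : Measurable g := hstepMeas q _ measurable_const
  have hgbnd : ∀ w, ν ≤ g w ∧ g w ≤ 1 := by
    intro w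
    have := hstepBnd q (fun _ => (1:ℝ)) 1 measurable_const zero_le_one
      (fun v => ⟨le_rfl, le_rfl⟩) w
    simpa using this
  set k₀ : ℕ := n - (q + 1) with hk₀def
  obtain ⟨L', U', hL'ν, hU'1, hdiff, hsand'⟩ := hMain k₀ (q+1) g (fun _ => (1:ℝ)) ν 1 ν 1
    hgmeas measurable_const hν0 one_pos hgbnd (fun v => ⟨le_rfl, le_rfl⟩) le_rfl le_rfl
    (fun v => by simpa using hgbnd v)
  have hL'pos : 0 < L' := lt_of_lt_of_le hν0 hL'ν
  -- L' ≤ U'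
  have hWkbnd := hchainBnd k₀ (q+1) (fun _ => (1:ℝ)) 1 measurable_const zero_le_one
    (fun v => ⟨le_rfl, le_rfl⟩)
  have hGkbnd := hchainBnd k₀ (q+1) g ν hgmeas hν0' hgbnd
  have hWkm : Measurable (chainOp π KS (q+1) k₀ (fun _ => (1:ℝ))) :=
    hchainMeas k₀ (q+1) _ measurable_const
  have hGkm : Measurable (chainOp π KS (q+1) k₀ g) := hchainMeas k₀ (q+1) _ hgmeas
  have hL'U' : L' ≤ U' := by
    have v₀ : V := Classical.arbitrary V
    have h1 := (hsand' v₀).1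
    have h2 := (hsand' v₀).2
    have h3 : 0 < chainOp π KS (q+1) k₀ (fun _ => (1:ℝ)) v₀ := by
      have := (hWkbnd v₀).1
      have hp : 0 < ν ^ k₀ * 1 := by positivity
      linarith
    nlinarith
  -- both conditional probabilities lie in [L', U']
  have hcond : ∀ N : ℕ, n ≤ N →
      L' ≤ condP π (fun _ => K) x q N ∧ condP π (fun _ => K) x q N ≤ U' := by
    intro N hN
    have hqN : q ≤ N := by omega
    have hsplit : N - q = k₀ + (N - q - k₀) := by omega
    set j : ℕ := N - q - k₀ with hjdef
    set Gk := chainOp π KS (q+1) k₀ g with hGk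
    set Wk := chainOp π KS (q+1) k₀ (fun _ => (1:ℝ)) with hWk
    have hGN : chainOp π KS (q+1) (N - q) g = chainOp π KS (q+1+k₀) j Gk := by
      rw [hsplit]; exact hchainSplit k₀ j (q+1) g
    have hWN : chainOp π KS (q+1) (N - q) (fun _ => (1:ℝ)) = chainOp π KS (q+1+k₀) j Wk := by
      rw [hsplit]; exact hchainSplit k₀ j (q+1) _
    -- pointwise sandwich at level N
    have hWkabs : ∀ v, |Wk v| ≤ 1 := by
      intro v
      have h1 := (hWkbnd v).1
      have hp : (0:ℝ) ≤ ν ^ k₀ * 1 := by positivity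
      rw [abs_le]
      exact ⟨by linarith, (hWkbnd v).2⟩
    have habsL : ∀ v, |L' * Wk v| ≤ 1 := by
      intro v
      rw [abs_mul]
      have h1 : |L'| ≤ 1 := abs_le.2 ⟨by linarith, le_trans hL'U' hU'1⟩
      calc |L'| * |Wk v| ≤ 1 * 1 := mul_le_mul h1 (hWkabs v) (abs_nonneg _) zero_le_one
        _ = 1 := by norm_num
    have habsU : ∀ v, |U' * Wk v| ≤ 1 := by
      intro v
      rw [abs_mul]
      have h1 : |U'| ≤ 1 := abs_le.2 ⟨by linarith [le_trans hL'ν hL'U'], hU'1⟩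
      calc |U'| * |Wk v| ≤ 1 * 1 := mul_le_mul h1 (hWkabs v) (abs_nonneg _) zero_le_one
        _ = 1 := by norm_num
    have habsGk : ∀ v, |Gk v| ≤ 1 := by
      intro v
      refine abs_le.2 ⟨?_, (hGkbnd v).2⟩
      have := (hGkbnd v).1
      have hp : (0:ℝ) ≤ ν ^ k₀ * ν := by positivity
      linarith
    have hsandN : ∀ v, L' * chainOp π KS (q+1+k₀) j Wk v ≤ chainOp π KS (q+1+k₀) j Gk v ∧
        chainOp π KS (q+1+k₀) j Gk v ≤ U' * chainOp π KS (q+1+k₀) j Wk v := by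
      intro v
      constructor
      · have h := hchainMono j (q+1+k₀) (fun u => L' * Wk u) Gk 1 1
          (hWkm.const_mul L') hGkm habsL habsGk (fun u => (hsand' u).1) v
        rw [hchainCMul j (q+1+k₀) Wk L' v] at h
        exact h
      · have h := hchainMono j (q+1+k₀) Gk (fun u => U' * Wk u) 1 1
          hGkm (hWkm.const_mul U') habsGk habsU (fun u => (hsand' u).2) v
        rw [hchainCMul j (q+1+k₀) Wk U' v] at h
        exact h
    -- integrate
    have hGNm : Measurable (chainOp π KS (q+1+k₀) j Gk) := hchainMeas j _ _ hGkm
    have hWNm : Measurable (chainOp π KS (q+1+k₀) j Wk) := hchainMeas j _ _ hWkm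
    have hGNbnd := hchainBnd j (q+1+k₀) Gk (ν ^ k₀ * ν) hGkm
      (by positivity) hGkbnd
    have hWNbnd := hchainBnd j (q+1+k₀) Wk (ν ^ k₀ * 1) hWkm
      (by positivity) hWkbnd
    have habsGN : ∀ v, |chainOp π KS (q+1+k₀) j Gk v| ≤ 1 := by
      intro v
      refine abs_le.2 ⟨?_, (hGNbnd v).2⟩
      have := (hGNbnd v).1
      have hp : (0:ℝ) ≤ ν ^ j * (ν ^ k₀ * ν) := by positivity
      linarith
    have habsWN : ∀ v, |chainOp π KS (q+1+k₀) j Wk v| ≤ 1 := by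
      intro v
      refine abs_le.2 ⟨?_, (hWNbnd v).2⟩
      have := (hWNbnd v).1
      have hp : (0:ℝ) ≤ ν ^ j * (ν ^ k₀ * 1) := by positivity
      linarith
    have hIntGN : Integrable (chainOp π KS (q+1+k₀) j Gk) π :=
      integrable_of_le_const π hGNm.aestronglyMeasurable habsGN
    have hIntWN : Integrable (chainOp π KS (q+1+k₀) j Wk) π :=
      integrable_of_le_const π hWNm.aestronglyMeasurable habsWN
    have hBpos : 0 < ∫ v, chainOp π KS (q+1+k₀) j Wk v ∂π := by
      have h := integral_mono (integrable_const (ν ^ j * (ν ^ k₀ * 1))) hIntWN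
        (fun v => (hWNbnd v).1)
      simp only [integral_const, probReal_univ, measure_univ, ENNReal.toReal_one, one_smul] at h
      have hp : (0:ℝ) < ν ^ j * (ν ^ k₀ * 1) := by positivity
      linarith
    have hLA : L' * ∫ v, chainOp π KS (q+1+k₀) j Wk v ∂π
        ≤ ∫ v, chainOp π KS (q+1+k₀) j Gk v ∂π := by
      have h := integral_mono (hIntWN.const_mul L') hIntGN (fun v => (hsandN v).1)
      rwa [integral_const_mul] at h
    have hAU : (∫ v, chainOp π KS (q+1+k₀) j Gk v ∂π)
        ≤ U' * ∫ v, chainOp π KS (q+1+k₀) j Wk v ∂π := by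
      have h := integral_mono hIntGN (hIntWN.const_mul U') (fun v => (hsandN v).2)
      rwa [integral_const_mul] at h
    have hcondval : condP π (fun _ => K) x q N
        = (∫ v, chainOp π KS (q+1+k₀) j Gk v ∂π) / ∫ v, chainOp π KS (q+1+k₀) j Wk v ∂π := by
      show margP π (fun _ => K) x q N / margP π (fun _ => K) x (q + 1) N = _
      rw [hmarg1 N hqN, hmarg2 N hqN, hGN, hWN]
    rw [hcondval]
    constructor
    · exact (le_div_iff₀ hBpos).2 hLA
    · exact (div_le_iff₀ hBpos).2 (by linarith)
  -- final numeric estimate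
  obtain ⟨hA1, hA2⟩ := hcond n le_rfl
  obtain ⟨hB1, hB2⟩ := hcond (n + ℓ) (by omega)
  set A := condP π (fun _ => K) x q n with hAdef
  set B := condP π (fun _ => K) x q (n + ℓ) with hBdef
  have hApos : 0 < A := lt_of_lt_of_le hL'pos hA1
  have hBpos : 0 < B := lt_of_lt_of_le hL'pos hB1
  have hU'pos : 0 < U' := lt_of_lt_of_le hL'pos hL'U'
  have hlogs : |Real.log A - Real.log B| ≤ Real.log U' - Real.log L' := by
    have h1 : Real.log L' ≤ Real.log A := Real.log_le_log hL'pos hA1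
    have h2 : Real.log A ≤ Real.log U' := Real.log_le_log hApos hA2
    have h3 : Real.log L' ≤ Real.log B := Real.log_le_log hL'pos hB1
    have h4 : Real.log B ≤ Real.log U' := Real.log_le_log hBpos hB2
    rw [abs_le]
    constructor <;> linarith
  have hlogratio : Real.log U' - Real.log L' ≤ (U' - L') / L' := by
    rw [← Real.log_div (ne_of_gt hU'pos) (ne_of_gt hL'pos)]
    have h1 := Real.log_le_sub_one_of_pos (div_pos hU'pos hL'pos)
    have h2 : U' / L' - 1 = (U' - L') / L' := by
      field_simp
    linarith
  have hdiv1 : (U' - L') / L' ≤ (U' - L') / ν :=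
    div_le_div_of_nonneg_left (sub_nonneg.2 hL'U') hν0 hL'ν
  have hdiv2 : (U' - L') / ν ≤ ((1 - ν) ^ k₀ * (1 - ν)) / ν := by
    have h : U' - L' ≤ (1 - ν) ^ k₀ * (1 - ν) := by
      have := hdiff
      calc U' - L' ≤ (1 - ν) ^ k₀ * (1 - ν) := by linarith
        _ = (1 - ν) ^ k₀ * (1 - ν) := rfl
    exact (div_le_div_iff_of_pos_right hν0).2 h
  have hfinal : ((1 - ν) ^ k₀ * (1 - ν)) / ν ≤ ν⁻¹ * (1 - ν) ^ (n - 1 - q) := by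
    have hk : k₀ = n - 1 - q := by omega
    rw [hk, div_eq_inv_mul]
    have h1 : (1 - ν) ^ (n - 1 - q) * (1 - ν) ≤ (1 - ν) ^ (n - 1 - q) * 1 :=
      mul_le_mul_of_nonneg_left (by linarith) (pow_nonneg h1ν _)
    have h2 : (0:ℝ) ≤ ν⁻¹ := inv_nonneg.2 hν0'
    calc ν⁻¹ * ((1 - ν) ^ (n - 1 - q) * (1 - ν)) ≤ ν⁻¹ * ((1 - ν) ^ (n - 1 - q) * 1) :=
        mul_le_mul_of_nonneg_left h1 h2
      _ = ν⁻¹ * (1 - ν) ^ (n - 1 - q) := by ring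
  calc |Real.log A - Real.log B| ≤ Real.log U' - Real.log L' := hlogs
    _ ≤ (U' - L') / L' := hlogratio
    _ ≤ (U' - L') / ν := hdiv1
    _ ≤ ((1 - ν) ^ k₀ * (1 - ν)) / ν := hdiv2
    _ ≤ ν⁻¹ * (1 - ν) ^ (n - 1 - q) := hfinal
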